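/- Let p_tr, p_te be probability distributions, f a function bounded by 1 in absolute value, and S a measurable set with p_te(S) ≥ 1−ε and p_tr(S) ≥ 1−ε. Let p̂_tr and p̂_te be probability densities with support(p̂_te) ⊆ support(p̂_tr) ⊆ S and p̂_te(x)/p̂_tr(x) ≤ B for all x ∈ S. Then |E_{x∼p_tr}[(p̂_te(x)/p̂_tr(x))f(x)] − E_{x∼p_te}[f(x)]| ≤ B·d_TV(p_tr, p̂_tr) + d_TV(p_te, p̂_te). -/

import Mathlib

open MeasureTheory

/-- Truncated importance-weighting bias bound: if `p̂_te, p̂_tr` are supported in a set `S`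
of mass `≥ 1−ε` under both `p_tr` and `p_te`, with `p̂_te/p̂_tr ≤ B` on `S`, then
`|E_{p_tr}[(p̂_te/p̂_tr)f] − E_{p_te}[f]| ≤ B·d_TV(p_tr, p̂_tr) + d_TV(p_te, p̂_te)`. -/
theorem stmt_5 {α : Type*} [MeasurableSpace α] (μ : Measure α)
    (ptr pte phtr phte : α → ℝ) (f : α → ℝ) (S : Set α) (hS : MeasurableSet S)
    (ε B : ℝ) (hε : 0 ≤ ε) (hB : 0 < B)
    (hptr_nn : ∀ x, 0 ≤ ptr x) (hpte_nn : ∀ x, 0 ≤ pte x)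
    (hphtr_nn : ∀ x, 0 ≤ phtr x) (hphte_nn : ∀ x, 0 ≤ phte x)
    (hptr1 : ∫ x, ptr x ∂μ = 1) (hpte1 : ∫ x, pte x ∂μ = 1)
    (hphtr1 : ∫ x, phtr x ∂μ = 1) (hphte1 : ∫ x, phte x ∂μ = 1)
    (hpteS : 1 - ε ≤ ∫ x in S, pte x ∂μ) (hptrS : 1 - ε ≤ ∫ x in S, ptr x ∂μ)
    (hsupp_te_tr : ∀ x, phte x ≠ 0 → phtr x ≠ 0)
    (hsupp_tr_S : ∀ x ∉ S, phtr x = 0)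
    (hratio : ∀ x ∈ S, phte x ≤ B * phtr x)
    (hf_bd : ∀ x, |f x| ≤ 1)
    (hInt1 : Integrable (fun x => phte x / phtr x * f x * ptr x) μ)
    (hInt2 : Integrable (fun x => f x * pte x) μ)
    (hInt3 : Integrable (fun x => |ptr x - phtr x|) μ)
    (hInt4 : Integrable (fun x => |pte x - phte x|) μ) :
    |(∫ x, phte x / phtr x * f x * ptr x ∂μ) - ∫ x, f x * pte x ∂μ|
      ≤ B * (∫ x, |ptr x - phtr x| ∂μ) + ∫ x, |pte x - phte x| ∂μ := by
  set g : α → ℝ := fun x => phte x / phtr x * f x with hg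
  have key : ∀ x, g x * ptr x - f x * pte x
      = g x * (ptr x - phtr x) + f x * (phte x - pte x) := by
    intro x
    have h : g x * phtr x = f x * phte x := by
      by_cases h0 : phtr x = 0
      · have h1 : phte x = 0 := by
          by_contra hc; exact hsupp_te_tr x hc h0
        simp [hg, h0, h1]
      · simp only [hg]; rw [div_mul_eq_mul_div, div_mul_eq_mul_div, div_eq_iff h0]; ring
    linear_combination h
  have gbound : ∀ x, |g x| ≤ B := by
    intro x
    by_cases h0 : phtr x = 0
    · simp only [hg, h0, div_zero, zero_mul, abs_zero]
      exact hB.le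
    · have hxS : x ∈ S := by
        by_contra hx; exact h0 (hsupp_tr_S x hx)
      have hpos : 0 < phtr x := lt_of_le_of_ne (hphtr_nn x) (Ne.symm h0)
      have hdiv : phte x / phtr x ≤ B := (div_le_iff₀ hpos).mpr (hratio x hxS)
      have hdnn : 0 ≤ phte x / phtr x := div_nonneg (hphte_nn x) (hphtr_nn x)
      calc |g x| = phte x / phtr x * |f x| := by
            rw [hg, abs_mul, abs_of_nonneg hdnn]
        _ ≤ phte x / phtr x * 1 := mul_le_mul_of_nonneg_left (hf_bd x) hdnn
        _ ≤ B := by rw [mul_one]; exact hdiv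
  have hsub : Integrable (fun x => g x * ptr x - f x * pte x) μ := hInt1.sub hInt2
  calc |(∫ x, phte x / phtr x * f x * ptr x ∂μ) - ∫ x, f x * pte x ∂μ|
      = |∫ x, (g x * ptr x - f x * pte x) ∂μ| := by
        rw [integral_sub hInt1 hInt2]
    _ ≤ ∫ x, |g x * ptr x - f x * pte x| ∂μ := by
        simpa [Real.norm_eq_abs] using
          norm_integral_le_integral_norm (fun x => g x * ptr x - f x * pte x) (μ := μ)
    _ ≤ ∫ x, (B * |ptr x - phtr x| + |pte x - phte x|) ∂μ := by
        apply integral_mono hsub.abs ((hInt3.const_mul B).add hInt4)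
        intro x
        show |g x * ptr x - f x * pte x| ≤ B * |ptr x - phtr x| + |pte x - phte x|
        rw [key x]
        have h1 : |g x * (ptr x - phtr x)| ≤ B * |ptr x - phtr x| := by
          rw [abs_mul]
          exact mul_le_mul_of_nonneg_right (gbound x) (abs_nonneg _)
        have h2 : |f x * (phte x - pte x)| ≤ |pte x - phte x| := by
          rw [abs_mul, abs_sub_comm]
          calc |f x| * |pte x - phte x| ≤ 1 * |pte x - phte x| :=
                mul_le_mul_of_nonneg_right (hf_bd x) (abs_nonneg _)
            _ = |pte x - phte x| := one_mul _
        calc |g x * (ptr x - phtr x) + f x * (phte x - pte x)|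
            ≤ |g x * (ptr x - phtr x)| + |f x * (phte x - pte x)| := abs_add_le _ _
          _ ≤ B * |ptr x - phtr x| + |pte x - phte x| := add_le_add h1 h2
    _ = B * (∫ x, |ptr x - phtr x| ∂μ) + ∫ x, |pte x - phte x| ∂μ := by
        rw [integral_add (hInt3.const_mul B) hInt4, integral_const_mul]
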